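/- If k + h > m, the trace map tr: Λ^k V* ⊗ Λ^h W → Λ^{k−1} V* ⊗ Λ^{h−1} W is injective; moreover tr Φ = 0 implies θ^i ⩕ Φ = 0 for all i = 0,…,min{m−k, m−h}. -/

import Mathlib

open TensorProduct ExteriorAlgebra

noncomputable section

/-- Wedge product of a finite family of vectors, as an element of the exterior algebra. -/
def wedgeL {M : Type} [AddCommGroup M] [Module ℝ M] {n : ℕ} (v : Fin n → M) :
    ExteriorAlgebra ℝ M :=
  (List.ofFn fun i => ι ℝ (v i)).prod

/-- The bigraded algebra `Λ V* ⊗ Λ ℝ^m` of vector-valued forms, with `U` playing the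
role of `V*` and `Fin m → ℝ` the role of `W = ℝ^m`. -/
abbrev Omega (U : Type) [AddCommGroup U] [Module ℝ U] (m : ℕ) : Type :=
  ExteriorAlgebra ℝ U ⊗[ℝ] ExteriorAlgebra ℝ (Fin m → ℝ)

/-- The subspace of bidegree `(k, h)` elements: `Λ^k U ⊗ Λ^h ℝ^m`. -/
def bideg (U : Type) [AddCommGroup U] [Module ℝ U] (m k h : ℕ) :
    Submodule ℝ (Omega U m) :=
  Submodule.map₂ (TensorProduct.mk ℝ _ _) (⋀[ℝ]^k U) (⋀[ℝ]^h (Fin m → ℝ))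

/-- The solder element `θ = Σ_a θ^a ⊗ T_a`, where `T_a` is the standard basis of `ℝ^m`. -/
def solder {U : Type} [AddCommGroup U] [Module ℝ U] {m : ℕ} (u : Fin m → U) : Omega U m :=
  ∑ a, ι ℝ (u a) ⊗ₜ[ℝ] ι ℝ (Pi.single a 1)

/-- The composite volume element `ν = ν_g ⊗ n_h` (wedge of the dual orthonormal basis
tensor the wedge of the standard basis). -/
def vol {U : Type} [AddCommGroup U] [Module ℝ U] {m : ℕ} (u : Fin m → U) : Omega U m :=
  wedgeL u ⊗ₜ[ℝ] wedgeL (fun a : Fin m => Pi.single a (1 : ℝ))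

/-- The trace operator: contraction with `θ^♯`, i.e. `tr Φ = Σ_a (ι_{(u a)^♯} ⊗ ι_{(T a)^♭}) Φ`. -/
def trOp {U : Type} [AddCommGroup U] [Module ℝ U] {m : ℕ} (u : Fin m → U)
    (cU : U → Module.End ℝ (ExteriorAlgebra ℝ U))
    (cW : (Fin m → ℝ) → Module.End ℝ (ExteriorAlgebra ℝ (Fin m → ℝ))) :
    Module.End ℝ (Omega U m) :=
  ∑ a, TensorProduct.map (cU (u a)) (cW (Pi.single a 1))

namespace Stmt16Aux

variable {M : Type} [AddCommGroup M] [Module ℝ M]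

lemma wedgeL_cons {n : ℕ} (x : M) (v : Fin n → M) :
    wedgeL (Fin.cons x v) = ι ℝ x * wedgeL v := by
  unfold wedgeL
  rw [List.ofFn_succ]
  simp [List.prod_cons]

/-- The set of all wedges spans the exterior algebra. -/
lemma span_wedges_top :
    Submodule.span ℝ {w : ExteriorAlgebra ℝ M | ∃ (n : ℕ) (v : Fin n → M), w = wedgeL v} = ⊤ := by
  set S : Set (ExteriorAlgebra ℝ M) := {w | ∃ (n : ℕ) (v : Fin n → M), w = wedgeL v} with hS
  rw [eq_top_iff]
  rintro w -
  induction w using ExteriorAlgebra.induction with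
  | algebraMap r =>
      have h1 : (1 : ExteriorAlgebra ℝ M) ∈ S := ⟨0, Fin.elim0, by simp [wedgeL]⟩
      have : (algebraMap ℝ (ExteriorAlgebra ℝ M)) r = r • (1 : ExteriorAlgebra ℝ M) := by
        rw [Algebra.algebraMap_eq_smul_one]
      rw [this]
      exact Submodule.smul_mem _ _ (Submodule.subset_span h1)
  | ι x =>
      refine Submodule.subset_span ⟨1, fun _ => x, ?_⟩
      simp [wedgeL]
  | mul a b ha hb =>
      have hmul : Submodule.span ℝ S * Submodule.span ℝ S ≤ Submodule.span ℝ S := by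
        rw [Submodule.span_mul_span]
        refine Submodule.span_le.2 ?_
        rintro z ⟨z1, hz1, z2, hz2, rfl⟩
        obtain ⟨n1, v1, rfl⟩ := hz1
        obtain ⟨n2, v2, rfl⟩ := hz2
        refine Submodule.subset_span ⟨n1 + n2, Fin.append v1 v2, ?_⟩
        unfold wedgeL
        rw [show (List.ofFn fun i => ι ℝ (Fin.append v1 v2 i)) =
            (List.ofFn fun i => ι ℝ (v1 i)) ++ (List.ofFn fun i => ι ℝ (v2 i)) from ?_,
          List.prod_append]
        rw [List.ofFn_add]
        congr 1
        · simp only [Fin.append_left']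
        · simp only [Fin.append_right]
      exact hmul (Submodule.mul_mem_mul ha hb)
  | add a b ha hb => exact Submodule.add_mem _ ha hb

section contraction

variable (B : M →ₗ[ℝ] M →ₗ[ℝ] ℝ) (c : M → Module.End ℝ (ExteriorAlgebra ℝ M))
  (hc : ∀ (x : M) (n : ℕ) (v : Fin n → M),
      c x (wedgeL v) = ∑ i : Fin n, ((-1 : ℝ) ^ (i : ℕ) * B x (v i)) •
        ((List.ofFn fun j => ι ℝ (v j)).eraseIdx (i : ℕ)).prod)

include hc

lemma contr_wedge_cons (x y : M) {n : ℕ} (v : Fin n → M) :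
    c x (wedgeL (Fin.cons y v)) = B x y • wedgeL v - ι ℝ y * c x (wedgeL v) := by
  have hlist : (List.ofFn fun j : Fin (n + 1) => ι ℝ (Fin.cons y v j))
      = ι ℝ y :: List.ofFn (fun j : Fin n => ι ℝ (v j)) := by
    rw [List.ofFn_succ]; simp
  rw [hc x (n + 1) (Fin.cons y v), hlist, Fin.sum_univ_succ]
  simp only [Fin.cons_zero, Fin.cons_succ, Fin.val_zero, pow_zero, one_mul,
    List.eraseIdx_cons_zero, Fin.val_succ, List.eraseIdx_cons_succ, List.prod_cons]
  have h1 : ∀ i : Fin n, ((-1 : ℝ) ^ ((i : ℕ) + 1) * B x (v i)) •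
      (ι ℝ y * ((List.ofFn fun j => ι ℝ (v j)).eraseIdx (i : ℕ)).prod)
      = -(ι ℝ y * (((-1 : ℝ) ^ (i : ℕ) * B x (v i)) •
          ((List.ofFn fun j => ι ℝ (v j)).eraseIdx (i : ℕ)).prod)) := by
    intro i
    rw [mul_smul_comm, ← neg_smul]
    congr 1
    ring
  rw [Finset.sum_congr rfl fun i _ => h1 i, Finset.sum_neg_distrib, ← Finset.mul_sum,
    ← hc x n v]
  simp only [wedgeL, sub_eq_add_neg]

lemma contr_anticomm (x y : M) (w : ExteriorAlgebra ℝ M) :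
    c x (ι ℝ y * w) = B x y • w - ι ℝ y * c x w := by
  have h := span_wedges_top (M := M)
  set f : ExteriorAlgebra ℝ M →ₗ[ℝ] ExteriorAlgebra ℝ M :=
    (c x) ∘ₗ (LinearMap.mulLeft ℝ (ι ℝ y)) with hf
  set gmap : ExteriorAlgebra ℝ M →ₗ[ℝ] ExteriorAlgebra ℝ M :=
    B x y • LinearMap.id - (LinearMap.mulLeft ℝ (ι ℝ y)) ∘ₗ (c x) with hg
  have : f = gmap := by
    refine LinearMap.ext_on h ?_
    rintro w ⟨n, v, rfl⟩
    have := contr_wedge_cons B c hc x y v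
    rw [wedgeL_cons] at this
    simpa [hf, hg] using this
  have := LinearMap.congr_fun this w
  simpa [hf, hg] using this

lemma contr_one (x : M) : c x 1 = 0 := by
  have := hc x 0 (fun i => i.elim0)
  simpa [wedgeL] using this

/-- The number operator: given a "resolution of identity" family, the operator
`∑ a, ε a • (ι (e a) * c (e a) ·)` acts as `n` on wedges of `n` vectors. -/
lemma number_wedge {m : ℕ} (e : Fin m → M) (ε : Fin m → ℝ)
    (hres : ∀ y : M, ∑ a, (ε a * B (e a) y) • e a = y)
    (n : ℕ) (v : Fin n → M) :
    ∑ a, ε a • (ι ℝ (e a) * c (e a) (wedgeL v)) = (n : ℝ) • wedgeL v := by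
  induction n with
  | zero =>
      simp only [Nat.cast_zero, zero_smul]
      have h1 : wedgeL v = 1 := by simp [wedgeL]
      simp [h1, contr_one B c hc]
  | succ n ih =>
      have hv : wedgeL v = ι ℝ (v 0) * wedgeL (Fin.tail v) := by
        rw [← wedgeL_cons, Fin.cons_self_tail]
      rw [hv]
      have key : ∀ a, ε a • (ι ℝ (e a) * c (e a) (ι ℝ (v 0) * wedgeL (Fin.tail v)))
          = (ε a * B (e a) (v 0)) • (ι ℝ (e a) * wedgeL (Fin.tail v))
            + ι ℝ (v 0) * (ε a • (ι ℝ (e a) * c (e a) (wedgeL (Fin.tail v)))) := by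
        intro a
        rw [contr_anticomm B c hc]
        rw [mul_sub, smul_sub]
        have h2 : ι ℝ (e a) * (ι ℝ (v 0) * c (e a) (wedgeL (Fin.tail v)))
            = -(ι ℝ (v 0) * (ι ℝ (e a) * c (e a) (wedgeL (Fin.tail v)))) := by
          rw [← mul_assoc, ← mul_assoc]
          have h3 : ι ℝ (e a) * ι ℝ (v 0) = -(ι ℝ (v 0) * ι ℝ (e a)) :=
            eq_neg_of_add_eq_zero_left (ι_add_mul_swap (e a) (v 0))
          rw [h3, neg_mul]
        rw [h2, smul_neg, sub_neg_eq_add, mul_smul_comm, smul_smul, mul_smul_comm]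
      rw [Finset.sum_congr rfl fun a _ => key a, Finset.sum_add_distrib]
      have hA : ∑ a, (ε a * B (e a) (v 0)) • (ι ℝ (e a) * wedgeL (Fin.tail v))
          = ι ℝ (v 0) * wedgeL (Fin.tail v) := by
        have : ∀ a, (ε a * B (e a) (v 0)) • (ι ℝ (e a) * wedgeL (Fin.tail v))
            = (ι ℝ ((ε a * B (e a) (v 0)) • e a)) * wedgeL (Fin.tail v) := by
          intro a; rw [map_smul, smul_mul_assoc]
        rw [Finset.sum_congr rfl fun a _ => this a, ← Finset.sum_mul, ← map_sum,
          hres (v 0)]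
      have hB : ∑ a, ι ℝ (v 0) * (ε a • (ι ℝ (e a) * c (e a) (wedgeL (Fin.tail v))))
          = ι ℝ (v 0) * ((n : ℝ) • wedgeL (Fin.tail v)) := by
        rw [← Finset.mul_sum, ih (Fin.tail v)]
      rw [hA, hB, mul_smul_comm]
      push_cast
      rw [add_smul, one_smul]
      abel

/-- The number operator acts as `n` on the `n`-th exterior power. -/
lemma number_on_power {m : ℕ} (e : Fin m → M) (ε : Fin m → ℝ)
    (hres : ∀ y : M, ∑ a, (ε a * B (e a) y) • e a = y)
    (n : ℕ) (w : ExteriorAlgebra ℝ M) (hw : w ∈ ⋀[ℝ]^n M) :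
    ∑ a, ε a • (ι ℝ (e a) * c (e a) w) = (n : ℝ) • w := by
  set N : Module.End ℝ (ExteriorAlgebra ℝ M) :=
    ∑ a, ε a • ((LinearMap.mulLeft ℝ (ι ℝ (e a))) ∘ₗ (c (e a))) with hN
  have hNw : ∀ w, N w = ∑ a, ε a • (ι ℝ (e a) * c (e a) w) := by
    intro w
    rw [hN, LinearMap.sum_apply]
    exact Finset.sum_congr rfl fun a _ => rfl
  have hker : ⋀[ℝ]^n M ≤ LinearMap.ker (N - (n : ℝ) • LinearMap.id) := by
    rw [← ιMulti_span_fixedDegree, Submodule.span_le]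
    rintro w ⟨v, rfl⟩
    simp only [SetLike.mem_coe, LinearMap.mem_ker, LinearMap.sub_apply, LinearMap.smul_apply,
      LinearMap.id_apply, sub_eq_zero]
    rw [hNw, ιMulti_apply]
    exact number_wedge B c hc e ε hres n v
  have := hker hw
  rw [LinearMap.mem_ker, LinearMap.sub_apply, LinearMap.smul_apply, LinearMap.id_apply,
    sub_eq_zero] at this
  rw [← hNw]; exact this

end contraction

/-- Vanishing of exterior powers above the dimension. -/
lemma exteriorPower_eq_bot [Module.Finite ℝ M] {n : ℕ} (hn : Module.finrank ℝ M < n) :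
    (⋀[ℝ]^n M : Submodule ℝ (ExteriorAlgebra ℝ M)) = ⊥ := by
  rw [← ιMulti_span_fixedDegree, eq_bot_iff, Submodule.span_le]
  rintro w ⟨v, rfl⟩
  have hdep : ¬ LinearIndependent ℝ v := by
    intro hind
    have := hind.fintype_card_le_finrank
    simp at this
    omega
  simp [AlternatingMap.map_linearDependent _ v hdep]

end Stmt16Aux

set_option maxHeartbeats 2000000 in
set_option synthInstance.maxHeartbeats 1000000 in
set_option maxRecDepth 4000 in
open Stmt16Aux in
/-- For `k + h > m`, the trace is injective on bidegree `(k,h)`; moreover `tr Φ = 0`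
implies `θ^i ⩕ Φ = 0` for all `i = 0, …, min{m−k, m−h}`. -/
theorem stmt_16 (m r s k h : ℕ) (hm : r + s = m) (hkh : m < k + h)
    (U : Type) [AddCommGroup U] [Module ℝ U]
    (η : (Fin m → ℝ) →ₗ[ℝ] (Fin m → ℝ) →ₗ[ℝ] ℝ)
    (hη : ∀ v w, η v w = ∑ a : Fin _, (if (a : ℕ) < s then (-1 : ℝ) else 1) * v a * w a)
    (g : U →ₗ[ℝ] U →ₗ[ℝ] ℝ) (u : Module.Basis (Fin m) ℝ U)
    (hg : ∀ a b, g (u a) (u b) = if a = b then (if (a : ℕ) < s then (-1 : ℝ) else 1) else 0)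
    (cU : U → Module.End ℝ (ExteriorAlgebra ℝ U))
    (hcU : ∀ (x : U) (n : ℕ) (v : Fin n → U),
      cU x (wedgeL v) = ∑ i : Fin n, ((-1 : ℝ) ^ (i : ℕ) * g x (v i)) •
        ((List.ofFn fun j => ι ℝ (v j)).eraseIdx (i : ℕ)).prod)
    (cW : (Fin m → ℝ) → Module.End ℝ (ExteriorAlgebra ℝ (Fin m → ℝ)))
    (hcW : ∀ (y : Fin m → ℝ) (n : ℕ) (v : Fin n → (Fin m → ℝ)),
      cW y (wedgeL v) = ∑ i : Fin n, ((-1 : ℝ) ^ (i : ℕ) * η y (v i)) •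
        ((List.ofFn fun j => ι ℝ (v j)).eraseIdx (i : ℕ)).prod)
    :
    (∀ Φ Ψ, Φ ∈ bideg U m k h → Ψ ∈ bideg U m k h →
      trOp (fun a => u a) cU cW Φ = trOp (fun a => u a) cU cW Ψ → Φ = Ψ) ∧
    (∀ Φ, Φ ∈ bideg U m k h → trOp (fun a => u a) cU cW Φ = 0 →
      ∀ i ≤ min (m - k) (m - h), (solder (fun a => u a)) ^ i * Φ = 0) := by
  classical
  set ε : Fin m → ℝ := fun a => if (a : ℕ) < s then (-1 : ℝ) else 1 with hε
  have hε2 : ∀ a, ε a * ε a = 1 := by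
    intro a; by_cases ha : (a : ℕ) < s <;> simp [hε, ha]
  set T : Fin m → (Fin m → ℝ) := fun a => Pi.single a 1 with hT
  set θ : Omega U m := solder (fun a => u a) with hθ
  set tr : Module.End ℝ (Omega U m) := trOp (fun a => u a) cU cW with htrdef
  -- basic delta computations
  have hηd : ∀ a b, η (T a) (T b) = if a = b then ε a else 0 := by
    intro a b
    rw [hη]
    simp only [hT, Pi.single_apply]
    by_cases hab : a = b
    · subst hab
      simp [hε]
    · rw [if_neg hab]
      apply Finset.sum_eq_zero
      intro c _
      by_cases hca : c = a <;> by_cases hcb : c = b <;> simp_all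
  -- resolutions of identity
  have hresU : ∀ x : U, ∑ a, (ε a * g (u a) x) • (u a) = x := by
    intro x
    have hx : ∀ a, g (u a) x = ε a * u.repr x a := by
      intro a
      conv_lhs => rw [← u.sum_repr x]
      rw [map_sum]
      simp only [map_smul, smul_eq_mul, hg]
      rw [Finset.sum_eq_single a]
      · simp [hε, mul_comm]
      · intro b _ hb; simp [if_neg (Ne.symm hb)]
      · intro habs; simp at habs
    calc ∑ a, (ε a * g (u a) x) • (u a) = ∑ a, (u.repr x a) • u a := by
          refine Finset.sum_congr rfl fun a _ => ?_
          rw [hx a, ← mul_assoc, hε2, one_mul]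
      _ = x := u.sum_repr x
  have hresW : ∀ y : Fin m → ℝ, ∑ a, (ε a * η (T a) y) • (T a) = y := by
    intro y
    have hy : ∀ a, η (T a) y = ε a * y a := by
      intro a
      rw [hη]
      rw [Finset.sum_eq_single a]
      · simp [hT, hε]
      · intro b _ hb; simp [hT, Pi.single_eq_of_ne hb]
      · intro habs; simp at habs
    have : ∀ a, (ε a * η (T a) y) • (T a) = Pi.single a (y a) := by
      intro a
      rw [hy a, ← mul_assoc, hε2, one_mul, hT]
      ext j
      by_cases hj : j = a
      · subst hj; simp
      · simp [Pi.single_eq_of_ne hj]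
    rw [Finset.sum_congr rfl fun a _ => this a]
    exact Finset.univ_sum_single y
  -- instances for finrank
  have : Module.Finite ℝ U := Module.Finite.of_basis u
  have hfinU : Module.finrank ℝ U = m := by
    rw [Module.finrank_eq_card_basis u, Fintype.card_fin]
  have hfinW : Module.finrank ℝ (Fin m → ℝ) = m := Module.finrank_fin_fun ℝ
  -- vanishing of bidegrees above dimension
  have hbot : ∀ k' h', (m < k' ∨ m < h') → bideg U m k' h' = ⊥ := by
    intro k' h' hcase
    rcases hcase with hc | hc
    · rw [bideg, Stmt16Aux.exteriorPower_eq_bot (M := U) (hfinU.trans_lt hc),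
        Submodule.map₂_bot_left]
    · rw [bideg, Stmt16Aux.exteriorPower_eq_bot (M := Fin m → ℝ) (hfinW.trans_lt hc),
        Submodule.map₂_bot_right]
  -- the commutator identity (Lemma A)
  have lemA : ∀ (k' h' : ℕ) (Φ : Omega U m), Φ ∈ bideg U m k' h' →
      tr (θ * Φ) = (((m : ℝ) - k' - h')) • Φ + θ * tr Φ := by
    intro k' h'
    set Top : Module.End ℝ (Omega U m) :=
      tr ∘ₗ (LinearMap.mulLeft ℝ θ) - ((m : ℝ) - k' - h') • LinearMap.id
        - (LinearMap.mulLeft ℝ θ) ∘ₗ tr with hTop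
    have hTopapply : ∀ Φ, Top Φ = tr (θ * Φ) - ((m : ℝ) - k' - h') • Φ - θ * tr Φ := by
      intro Φ; simp [hTop]
    suffices hsuff : bideg U m k' h' ≤ LinearMap.ker Top by
      intro Φ hΦ
      have := hsuff hΦ
      rw [LinearMap.mem_ker, hTopapply, sub_eq_zero, sub_eq_iff_eq_add'] at this
      exact this
    rw [bideg, Submodule.map₂_le]
    -- reduce to wedges
    suffices hwedges : ∀ (v : Fin k' → U) (w : Fin h' → (Fin m → ℝ)),
        Top ((ιMulti ℝ k' v) ⊗ₜ[ℝ] (ιMulti ℝ h' w)) = 0 by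
      intro ω hω τ hτ
      simp only [TensorProduct.mk_apply]
      have hstep1 : ∀ τ' ∈ (⋀[ℝ]^h' (Fin m → ℝ)), Top (ω ⊗ₜ[ℝ] τ') = 0 := by
        have hω' : ω ∈ Submodule.span ℝ (Set.range (ιMulti ℝ k' (M := U))) := by
          rwa [ιMulti_span_fixedDegree]
        intro τ' hτ'
        have hτ'' : τ' ∈ Submodule.span ℝ (Set.range (ιMulti ℝ h' (M := Fin m → ℝ))) := by
          rwa [ιMulti_span_fixedDegree]
        -- as kernel membership of the composite linear maps
        have hωker : ω ∈ LinearMap.ker (Top ∘ₗ ((TensorProduct.mk ℝ _ _).flip τ')) := by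
          refine Submodule.span_le.2 ?_ hω'
          rintro _ ⟨v, rfl⟩
          have hτker : τ' ∈ LinearMap.ker (Top ∘ₗ (TensorProduct.mk ℝ _ _ (ιMulti ℝ k' v))) := by
            refine Submodule.span_le.2 ?_ hτ''
            rintro _ ⟨w, rfl⟩
            simpa using hwedges v w
          simpa using hτker
        simpa using hωker
      exact LinearMap.mem_ker.1 (by simpa using hstep1 τ hτ)
    -- the core computation on wedges
    intro v w
    rw [hTopapply]
    set ω : ExteriorAlgebra ℝ U := ιMulti ℝ k' v with hω
    set τ : ExteriorAlgebra ℝ (Fin m → ℝ) := ιMulti ℝ h' w with hτ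
    have hθmul : θ * (ω ⊗ₜ[ℝ] τ) = ∑ a, (ι ℝ (u a) * ω) ⊗ₜ[ℝ] (ι ℝ (T a) * τ) := by
      rw [hθ, solder, Finset.sum_mul]
      exact Finset.sum_congr rfl fun a _ => Algebra.TensorProduct.tmul_mul_tmul _ _ _ _
    have htra : ∀ (x : Omega U m), tr x = ∑ b, (TensorProduct.map (cU (u b)) (cW (T b))) x := by
      intro x; rw [htrdef, trOp]; simp [hT]
    -- Expand tr (θ * (ω ⊗ τ))
    have hexp : tr (θ * (ω ⊗ₜ[ℝ] τ)) =
        ∑ b, ∑ a, (cU (u b) (ι ℝ (u a) * ω)) ⊗ₜ[ℝ] (cW (T b) (ι ℝ (T a) * τ)) := by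
      rw [hθmul, htra]
      refine Finset.sum_congr rfl fun b _ => ?_
      rw [map_sum]
      exact Finset.sum_congr rfl fun a _ => TensorProduct.map_tmul _ _ _ _
    rw [hexp]
    have hanU : ∀ b a, cU (u b) (ι ℝ (u a) * ω)
        = (if b = a then ε b else 0) • ω - ι ℝ (u a) * cU (u b) ω := by
      intro b a
      rw [contr_anticomm g cU hcU, hg]
    have hanW : ∀ b a, cW (T b) (ι ℝ (T a) * τ)
        = (if b = a then ε b else 0) • τ - ι ℝ (T a) * cW (T b) τ := by
      intro b a
      rw [contr_anticomm η cW hcW, hηd]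
    have hterm : ∀ b a, (cU (u b) (ι ℝ (u a) * ω)) ⊗ₜ[ℝ] (cW (T b) (ι ℝ (T a) * τ))
        = ((if b = a then ε b else 0) • ω) ⊗ₜ[ℝ] ((if b = a then ε b else 0) • τ)
          - ((if b = a then ε b else 0) • ω) ⊗ₜ[ℝ] (ι ℝ (T a) * cW (T b) τ)
          - (ι ℝ (u a) * cU (u b) ω) ⊗ₜ[ℝ] ((if b = a then ε b else 0) • τ)
          + (ι ℝ (u a) * cU (u b) ω) ⊗ₜ[ℝ] (ι ℝ (T a) * cW (T b) τ) := by
      intro b a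
      rw [hanU, hanW, TensorProduct.sub_tmul, TensorProduct.tmul_sub, TensorProduct.tmul_sub]
      ring_nf
      abel
    rw [Finset.sum_congr rfl fun b _ => Finset.sum_congr rfl fun a _ => hterm b a]
    simp only [Finset.sum_add_distrib, Finset.sum_sub_distrib]
    -- term 1
    have hS1 : ∑ b, ∑ a : Fin m, ((if b = a then ε b else 0) • ω) ⊗ₜ[ℝ]
        ((if b = a then ε b else 0) • τ) = (m : ℝ) • (ω ⊗ₜ[ℝ] τ) := by
      have hpt : ∀ b a : Fin m, ((if b = a then ε b else 0) • ω) ⊗ₜ[ℝ]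
          ((if b = a then ε b else 0) • τ)
          = if b = a then ω ⊗ₜ[ℝ] τ else 0 := by
        intro b a
        by_cases hba : b = a
        · subst hba
          rw [if_pos rfl, if_pos rfl, TensorProduct.smul_tmul, TensorProduct.tmul_smul,
            TensorProduct.tmul_smul, smul_smul, hε2, one_smul]
        · rw [if_neg hba, if_neg hba, zero_smul, TensorProduct.zero_tmul]
      rw [Finset.sum_congr rfl fun b _ => Finset.sum_congr rfl fun a _ => hpt b a,
        Finset.sum_congr rfl fun b _ =>
          Finset.sum_ite_eq Finset.univ b (fun _ => ω ⊗ₜ[ℝ] τ)]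
      simp only [Finset.mem_univ, if_pos]
      rw [Finset.sum_const, Finset.card_univ, Fintype.card_fin, ← Nat.cast_smul_eq_nsmul ℝ]
    -- term 2
    have hS2 : ∑ b, ∑ a : Fin m, ((if b = a then ε b else 0) • ω) ⊗ₜ[ℝ]
        (ι ℝ (T a) * cW (T b) τ) = (h' : ℝ) • (ω ⊗ₜ[ℝ] τ) := by
      have hpt : ∀ b a : Fin m, ((if b = a then ε b else 0) • ω) ⊗ₜ[ℝ]
          (ι ℝ (T a) * cW (T b) τ)
          = if b = a then ω ⊗ₜ[ℝ] (ε b • (ι ℝ (T a) * cW (T b) τ)) else 0 := by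
        intro b a
        by_cases hba : b = a
        · subst hba
          rw [if_pos rfl, if_pos rfl, TensorProduct.smul_tmul]
        · rw [if_neg hba, if_neg hba, zero_smul, TensorProduct.zero_tmul]
      rw [Finset.sum_congr rfl fun b _ => Finset.sum_congr rfl fun a _ => hpt b a,
        Finset.sum_congr rfl fun b _ =>
          Finset.sum_ite_eq Finset.univ b (fun a => ω ⊗ₜ[ℝ] (ε b • (ι ℝ (T a) * cW (T b) τ)))]
      simp only [Finset.mem_univ, if_pos]
      rw [← TensorProduct.tmul_sum]
      rw [number_on_power η cW hcW T ε hresW h' τ (hτ ▸ ιMulti_range ℝ h' ⟨w, rfl⟩)]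
      rw [TensorProduct.tmul_smul]
    -- term 3
    have hS3 : ∑ b, ∑ a : Fin m, (ι ℝ (u a) * cU (u b) ω) ⊗ₜ[ℝ]
        ((if b = a then ε b else 0) • τ) = (k' : ℝ) • (ω ⊗ₜ[ℝ] τ) := by
      have hpt : ∀ b a : Fin m, (ι ℝ (u a) * cU (u b) ω) ⊗ₜ[ℝ]
          ((if b = a then ε b else 0) • τ)
          = if b = a then (ε b • (ι ℝ (u a) * cU (u b) ω)) ⊗ₜ[ℝ] τ else 0 := by
        intro b a
        by_cases hba : b = a
        · subst hba
          rw [if_pos rfl, if_pos rfl, TensorProduct.tmul_smul, TensorProduct.smul_tmul']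
        · rw [if_neg hba, if_neg hba, zero_smul, TensorProduct.tmul_zero]
      rw [Finset.sum_congr rfl fun b _ => Finset.sum_congr rfl fun a _ => hpt b a,
        Finset.sum_congr rfl fun b _ =>
          Finset.sum_ite_eq Finset.univ b (fun a => (ε b • (ι ℝ (u a) * cU (u b) ω)) ⊗ₜ[ℝ] τ)]
      simp only [Finset.mem_univ, if_pos]
      rw [← TensorProduct.sum_tmul]
      rw [number_on_power g cU hcU (fun a => u a) ε hresU k' ω (hω ▸ ιMulti_range ℝ k' ⟨v, rfl⟩)]
      rw [TensorProduct.smul_tmul']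
    -- term 4
    have hrhs : θ * tr (ω ⊗ₜ[ℝ] τ) = ∑ a, ∑ b, (ι ℝ (u a) * cU (u b) ω) ⊗ₜ[ℝ]
        (ι ℝ (T a) * cW (T b) τ) := by
      rw [htra, hθ, solder, Finset.sum_mul]
      refine Finset.sum_congr rfl fun a _ => ?_
      rw [Finset.mul_sum]
      refine Finset.sum_congr rfl fun b _ => ?_
      rw [TensorProduct.map_tmul, Algebra.TensorProduct.tmul_mul_tmul]
    have hS4 : ∑ b, ∑ a : Fin m, (ι ℝ (u a) * cU (u b) ω) ⊗ₜ[ℝ]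
        (ι ℝ (T a) * cW (T b) τ) = θ * tr (ω ⊗ₜ[ℝ] τ) := by
      rw [hrhs]
      exact Finset.sum_comm
    rw [hS1, hS2, hS3, hS4]
    have : ((m : ℝ) - ↑k' - ↑h') • (ω ⊗ₜ[ℝ] τ)
        = (m : ℝ) • (ω ⊗ₜ[ℝ] τ) - (h' : ℝ) • (ω ⊗ₜ[ℝ] τ) - (k' : ℝ) • (ω ⊗ₜ[ℝ] τ) := by
      rw [← sub_smul, ← sub_smul]
      congr 1
      ring
    rw [this]
    abel
  -- θ raises bidegree
  have memθ : ∀ (k' h' : ℕ) (Φ : Omega U m), Φ ∈ bideg U m k' h' →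
      θ * Φ ∈ bideg U m (k' + 1) (h' + 1) := by
    intro k' h' Φ hΦ
    have : bideg U m k' h' ≤ Submodule.comap (LinearMap.mulLeft ℝ θ)
        (bideg U m (k' + 1) (h' + 1)) := by
      rw [bideg, Submodule.map₂_le]
      intro ω hω τ hτ
      simp only [Submodule.mem_comap, LinearMap.mulLeft_apply, TensorProduct.mk_apply]
      have hθmul : θ * (ω ⊗ₜ[ℝ] τ) = ∑ a, (ι ℝ (u a) * ω) ⊗ₜ[ℝ] (ι ℝ (T a) * τ) := by
        rw [hθ, solder, Finset.sum_mul]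
        exact Finset.sum_congr rfl fun a _ => Algebra.TensorProduct.tmul_mul_tmul _ _ _ _
      rw [hθmul]
      refine Submodule.sum_mem _ fun a _ => ?_
      refine Submodule.apply_mem_map₂ _ ?_ ?_
      · rw [show k' + 1 = 1 + k' from by omega, exteriorPower, pow_add, pow_one]
        exact Submodule.mul_mem_mul (LinearMap.mem_range_self _ _) hω
      · rw [show h' + 1 = 1 + h' from by omega, exteriorPower, pow_add, pow_one]
        exact Submodule.mul_mem_mul (LinearMap.mem_range_self _ _) hτ
    exact this hΦ
  -- powers of θ stay in raising bidegrees
  have hpow : ∀ (Φ : Omega U m), Φ ∈ bideg U m k h → ∀ i, θ ^ i * Φ ∈ bideg U m (k + i) (h + i) := by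
    intro Φ hΦ i
    induction i with
    | zero => simpa using hΦ
    | succ i ih =>
        have : θ ^ (i + 1) * Φ = θ * (θ ^ i * Φ) := by rw [pow_succ', mul_assoc]
        rw [this, show k + (i + 1) = (k + i) + 1 from by omega,
          show h + (i + 1) = (h + i) + 1 from by omega]
        exact memθ _ _ _ ih
  -- the key claim: tr Φ = 0 implies Φ = 0
  have key : ∀ (Φ : Omega U m), Φ ∈ bideg U m k h → tr Φ = 0 → Φ = 0 := by
    intro Φ hΦ htr0
    have htri : ∀ i : ℕ, tr (θ ^ (i + 1) * Φ)
        = (((i : ℝ) + 1) * ((m : ℝ) - k - h - i)) • (θ ^ i * Φ) := by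
      intro i
      induction i with
      | zero =>
          have h1 : θ ^ 1 * Φ = θ * (θ ^ 0 * Φ) := by rw [pow_one, pow_zero, one_mul]
          rw [h1, lemA k h _ (by simpa using hΦ)]
          simp only [pow_zero, one_mul]
          rw [show θ * tr Φ = 0 by rw [htr0, mul_zero], add_zero]
          norm_num
      | succ i ih =>
          have h1 : θ ^ (i + 2) * Φ = θ * (θ ^ (i + 1) * Φ) := by rw [pow_succ', mul_assoc]
          rw [h1, lemA (k + (i + 1)) (h + (i + 1)) _ (hpow Φ hΦ (i + 1)), ih]
          have h2 : θ * ((((i : ℝ) + 1) * ((m : ℝ) - k - h - i)) • (θ ^ i * Φ))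
              = (((i : ℝ) + 1) * ((m : ℝ) - k - h - i)) • (θ ^ (i + 1) * Φ) := by
            rw [mul_smul_comm]
            congr 1
            rw [pow_succ', mul_assoc]
          rw [h2, ← add_smul]
          congr 1
          push_cast
          ring
    set i0 : ℕ := min (m - k) (m - h) with hi0
    have hvan : θ ^ (i0 + 1) * Φ = 0 := by
      have hmem := hpow Φ hΦ (i0 + 1)
      have hcase : m < k + (i0 + 1) ∨ m < h + (i0 + 1) := by
        rcases le_total (m - k) (m - h) with hle | hle
        · left; have : i0 = m - k := min_eq_left hle; omega
        · right; have : i0 = m - h := min_eq_right hle; omega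
      rw [hbot _ _ hcase] at hmem
      simpa using hmem
    have desc : ∀ j : ℕ, θ ^ (j + 1) * Φ = 0 → θ ^ j * Φ = 0 := by
      intro j hj
      have := htri j
      rw [hj, map_zero] at this
      have hcoef : (((j : ℝ) + 1) * ((m : ℝ) - k - h - j)) ≠ 0 := by
        have hj1 : (0 : ℝ) < (j : ℝ) + 1 := by positivity
        have hmkh : (m : ℝ) < (k : ℝ) + (h : ℝ) := by exact_mod_cast hkh
        have : (m : ℝ) - k - h - j < 0 := by
          have : (0 : ℝ) ≤ (j : ℝ) := Nat.cast_nonneg j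
          linarith
        intro hcontra
        rcases mul_eq_zero.1 hcontra with h1 | h1 <;> linarith
      have := this.symm
      rwa [smul_eq_zero, or_iff_right hcoef] at this
    have hdown : ∀ t : ℕ, θ ^ (i0 + 1 - t) * Φ = 0 := by
      intro t
      induction t with
      | zero => simpa using hvan
      | succ t ih =>
          rcases (by omega : i0 + 1 - (t + 1) + 1 = i0 + 1 - t ∨ i0 + 1 - (t + 1) = i0 + 1 - t)
            with hj | hj
          · exact desc _ (by rw [hj]; exact ih)
          · rw [hj]; exact ih
      
    have := hdown (i0 + 1)
    simpa using this
  constructor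
  · intro Φ Ψ hΦ hΨ htreq
    have hsub : Φ - Ψ ∈ bideg U m k h := Submodule.sub_mem _ hΦ hΨ
    have : tr (Φ - Ψ) = 0 := by
      rw [map_sub, htreq, sub_self]
    exact sub_eq_zero.1 (key _ hsub this)
  · intro Φ hΦ htr0 i hi
    rw [key Φ hΦ htr0, mul_zero]
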